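/- Let G be a k-connected graph that has no Hamiltonian path. Then the length of a longest path in G is at least 2k. -/

import Mathlib

/-- A graph is `k`-connected if it has more than `k` vertices and deleting any set of
fewer than `k` vertices leaves a connected graph. -/
def KConnected {V : Type*} [Fintype V] (G : SimpleGraph V) (k : ℕ) : Prop :=
  k < Fintype.card V ∧
    ∀ S : Set V, S.ncard < k → (G.induce Sᶜ).Connected

open SimpleGraph

section helpers
variable {V : Type*} {G : SimpleGraph V}

lemma aux_getVert_mem_support {u v : V} (P : G.Walk u v) {i : ℕ} (hi : i ≤ P.length) :
    P.getVert i ∈ P.support :=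
  Walk.mem_support_iff_exists_getVert.mpr ⟨i, rfl, hi⟩

lemma aux_getVert_inj {u v : V} (P : G.Walk u v) :
    P.IsPath → ∀ i j, i ≤ P.length → j ≤ P.length → P.getVert i = P.getVert j → i = j := by
  induction P with
  | nil => intro _ i j hi hj _; simp at hi hj; omega
  | cons h q ih =>
    intro hP i j hi hj hij
    rw [Walk.cons_isPath_iff] at hP
    rw [Walk.length_cons] at hi hj
    match i, j with
    | 0, 0 => rfl
    | 0, j+1 =>
      exfalso
      rw [Walk.getVert_zero, Walk.getVert_cons_succ] at hij
      have hm : q.getVert j ∈ q.support := aux_getVert_mem_support q (by omega)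
      rw [← hij] at hm
      exact hP.2 hm
    | i+1, 0 =>
      exfalso
      rw [Walk.getVert_zero, Walk.getVert_cons_succ] at hij
      have hm : q.getVert i ∈ q.support := aux_getVert_mem_support q (by omega)
      rw [hij] at hm
      exact hP.2 hm
    | i+1, j+1 =>
      rw [Walk.getVert_cons_succ, Walk.getVert_cons_succ] at hij
      have := ih hP.1 i j (by omega) (by omega) hij
      omega

lemma aux_rot {u v : V} (P : G.Walk u v) :
    P.IsPath → ∀ i, i + 1 ≤ P.length → G.Adj v (P.getVert i) →
    ∃ Q : G.Walk u (P.getVert (i+1)), Q.IsPath ∧ Q.length = P.length ∧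
      ∀ x, (x ∈ Q.support ↔ x ∈ P.support) := by
  induction P with
  | nil => intro _ i hi; rw [Walk.length_nil] at hi; omega
  | @cons u w v h q ih =>
    intro hP i hi hadj
    rw [Walk.cons_isPath_iff] at hP
    match i with
    | 0 =>
      rw [Walk.getVert_zero] at hadj
      have hw : (Walk.cons h q).getVert 1 = w := Walk.snd_cons q h
      refine ⟨(Walk.cons hadj.symm q.reverse).copy rfl hw.symm, ?_, ?_, ?_⟩
      · rw [Walk.isPath_copy, Walk.cons_isPath_iff]
        refine ⟨hP.1.reverse, ?_⟩
        rw [Walk.support_reverse, List.mem_reverse]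
        exact hP.2
      · rw [Walk.length_copy, Walk.length_cons, Walk.length_reverse, Walk.length_cons]
      · intro x
        simp only [Walk.support_copy, Walk.support_cons, Walk.support_reverse,
          List.mem_cons, List.mem_reverse]
    | i+1 =>
      rw [Walk.getVert_cons_succ] at hadj
      rw [Walk.length_cons] at hi
      obtain ⟨Q', hQ'path, hQ'len, hQ'mem⟩ := ih hP.1 i (by omega) hadj
      have hv2 : (Walk.cons h q).getVert (i+1+1) = q.getVert (i+1) :=
        Walk.getVert_cons_succ q h
      refine ⟨(Walk.cons h Q').copy rfl hv2.symm, ?_, ?_, ?_⟩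
      · rw [Walk.isPath_copy, Walk.cons_isPath_iff]
        exact ⟨hQ'path, fun hm => hP.2 ((hQ'mem u).mp hm)⟩
      · simp [hQ'len]
      · intro x
        simp only [Walk.support_copy, Walk.support_cons, List.mem_cons, hQ'mem x]

end helpers

lemma aux_mindeg {V : Type*} [Fintype V] {G : SimpleGraph V} {k : ℕ}
    (hconn : KConnected G k) (v : V) : k ≤ {w | G.Adj v w}.ncard := by
  by_contra hlt
  push_neg at hlt
  set S : Set V := {w | G.Adj v w} with hSdef
  have hc := hconn.2 S hlt
  have hvS : v ∈ Sᶜ := by simp [hSdef]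
  obtain ⟨w, hwS, hwv⟩ : ∃ w, w ∈ Sᶜ ∧ w ≠ v := by
    by_contra hno
    push_neg at hno
    have hsub : (Set.univ : Set V) ⊆ insert v S := by
      intro w _
      by_cases h : w ∈ S
      · exact Set.mem_insert_of_mem _ h
      · rw [hno w h]
        exact Set.mem_insert _ _
    have h1 := Set.ncard_le_ncard hsub (Set.toFinite _)
    rw [Set.ncard_univ, Nat.card_eq_fintype_card] at h1
    have h2 := Set.ncard_insert_le v S
    have h3 := hconn.1
    omega
  obtain ⟨W⟩ := hc.preconnected ⟨v, hvS⟩ ⟨w, hwS⟩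
  have hne : (⟨v, hvS⟩ : ↥Sᶜ) ≠ ⟨w, hwS⟩ := fun hh => hwv (congrArg Subtype.val hh).symm
  have hadj := W.adj_snd (Walk.not_nil_of_ne hne)
  have hGadj : G.Adj v ↑(W.getVert 1) := by simpa using hadj
  exact (W.getVert 1).2 hGadj


/-- Let `G` be a `k`-connected graph that has no Hamiltonian path. Then the
length of a longest path in `G` is at least `2k`. -/
theorem stmt_1 {V : Type*} [Fintype V] [DecidableEq V] {G : SimpleGraph V} (k : ℕ)
    (hconn : KConnected G k)
    (hham : ∀ (u v : V) (W : G.Walk u v), ¬ W.IsHamiltonian)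
    {p₁ p₂ : V} (P : G.Walk p₁ p₂) (hP : P.IsPath)
    (hmax : ∀ (u v : V) (W : G.Walk u v), W.IsPath → W.length ≤ P.length) :
    2 * k ≤ P.length := by
  classical
  rcases Nat.eq_zero_or_pos k with hk | hk
  · subst hk; simp
  set ℓ := P.length with hℓ
  -- endpoints have all neighbors on P
  have ext1 : ∀ w, G.Adj p₁ w → w ∈ P.support := by
    intro w hw
    by_contra hws
    have hp' : (Walk.cons hw.symm P).IsPath := hP.cons hws
    have := hmax _ _ _ hp'
    rw [Walk.length_cons] at this
    omega
  have ext2 : ∀ w, G.Adj p₂ w → w ∈ P.support := by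
    intro w hw
    by_contra hws
    have hp' : (Walk.cons hw.symm P.reverse).IsPath :=
      hP.reverse.cons (by rwa [Walk.support_reverse, List.mem_reverse])
    have := hmax _ _ _ hp'
    rw [Walk.length_cons, Walk.length_reverse] at this
    omega
  -- a vertex off P
  obtain ⟨u0, hu0⟩ : ∃ u0, u0 ∉ P.support := by
    by_contra hall
    push_neg at hall
    exact hham p₁ p₂ P (hP.isHamiltonian_iff.mpr hall)
  -- G-walk from u0 to p₁ via connectivity
  have hc := hconn.2 ∅ (by simpa using hk)
  obtain ⟨W0⟩ := hc.preconnected ⟨u0, by simp⟩ ⟨p₁, by simp⟩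
  let f : G.induce ((∅ : Set V)ᶜ) →g G := ⟨Subtype.val, fun {a b} h => by simpa using h⟩
  let W1 : G.Walk u0 p₁ := W0.map f
  -- boundary dart
  obtain ⟨d, _, hdf, hds⟩ := W1.exists_boundary_dart {v | v ∉ P.support} hu0
    (by simp [P.start_mem_support])
  set x := d.fst with hxdef
  set y := d.snd with hydef
  have hxy : G.Adj x y := d.adj
  have hxs : x ∉ P.support := hdf
  have hys : y ∈ P.support := not_not.mp hds
  -- index sets
  set A := (Finset.range ℓ).filter (fun i => G.Adj p₁ (P.getVert (i+1))) with hAdef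
  set B := (Finset.range ℓ).filter (fun i => G.Adj p₂ (P.getVert i)) with hBdef
  -- k ≤ |A|
  have hA : k ≤ A.card := by
    have hmd := aux_mindeg hconn p₁
    have hset : {w | G.Adj p₁ w} = ↑(Finset.univ.filter (fun w => G.Adj p₁ w)) := by
      ext w; simp
    rw [hset, Set.ncard_coe_finset] at hmd
    refine hmd.trans (Finset.card_le_card_of_surjOn (fun i => P.getVert (i+1)) ?_)
    intro w hw
    simp only [Finset.coe_filter, Set.mem_setOf_eq] at hw
    obtain ⟨n, hn, hnle⟩ := Walk.mem_support_iff_exists_getVert.mp (ext1 w hw.2)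
    have hn0 : n ≠ 0 := by
      rintro rfl
      rw [Walk.getVert_zero] at hn
      rw [← hn] at hw
      exact G.loopless.irrefl _ hw.2
    refine ⟨n - 1, ?_, ?_⟩
    · simp only [hAdef, Finset.coe_filter, Set.mem_setOf_eq, Finset.mem_range]
      constructor
      · omega
      · rw [(by omega : n - 1 + 1 = n), hn]
        exact hw.2
    · simp only
      rw [(by omega : n - 1 + 1 = n), hn]
  -- k ≤ |B|
  have hB : k ≤ B.card := by
    have hmd := aux_mindeg hconn p₂
    have hset : {w | G.Adj p₂ w} = ↑(Finset.univ.filter (fun w => G.Adj p₂ w)) := by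
      ext w; simp
    rw [hset, Set.ncard_coe_finset] at hmd
    refine hmd.trans (Finset.card_le_card_of_surjOn (fun i => P.getVert i) ?_)
    intro w hw
    simp only [Finset.coe_filter, Set.mem_setOf_eq] at hw
    obtain ⟨n, hn, hnle⟩ := Walk.mem_support_iff_exists_getVert.mp (ext2 w hw.2)
    have hnℓ : n ≠ ℓ := by
      rintro rfl
      rw [hℓ, Walk.getVert_length] at hn
      rw [← hn] at hw
      exact G.loopless.irrefl _ hw.2
    refine ⟨n, ?_, ?_⟩
    · simp only [hBdef, Finset.coe_filter, Set.mem_setOf_eq, Finset.mem_range]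
      exact ⟨by omega, by rw [hn]; exact hw.2⟩
    · exact hn
  -- disjointness
  have hdisj : Disjoint A B := by
    rw [Finset.disjoint_left]
    intro i hiA hiB
    rw [hAdef, Finset.mem_filter, Finset.mem_range] at hiA
    rw [hBdef, Finset.mem_filter, Finset.mem_range] at hiB
    obtain ⟨hiℓ, hb⟩ := hiA
    obtain ⟨-, ha⟩ := hiB
    obtain ⟨Q, hQpath, hQlen, hQmem⟩ := aux_rot P hP i (by omega) ha
    set C : G.Walk p₁ p₁ := Q.concat hb.symm with hCdef
    have hCsup : C.support = Q.support ++ [p₁] := by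
      rw [hCdef, Walk.support_concat]
    have hyC : y ∈ C.support := by
      rw [hCsup]
      exact List.mem_append_left _ ((hQmem y).mpr hys)
    set C' := C.rotate y hyC with hC'def
    have hCsplit := congrArg Walk.length (C.take_spec hyC)
    rw [Walk.length_append] at hCsplit
    have hC'eq : C' = (C.dropUntil y hyC).append (C.takeUntil y hyC) := rfl
    have hC'len : C'.length = ℓ + 1 := by
      rw [hC'eq, Walk.length_append]
      have hClen : C.length = ℓ + 1 := by
        rw [hCdef, Walk.length_concat, hQlen]
      omega
    have hC'nil : ¬ C'.Nil := by
      rw [Walk.nil_iff_length_eq, hC'len]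
      omega
    have htailsup : C'.tail.support = C'.support.tail :=
      Walk.support_tail_of_not_nil _ hC'nil
    have hrot : C'.support.tail ~r C.support.tail := Walk.support_rotate C y hyC
    have hCtail : C.support.tail = Q.support.tail ++ [p₁] := by
      rw [hCsup, Q.support_eq_cons]
      simp
    have hQnodup := hQpath.support_nodup
    rw [Q.support_eq_cons, List.nodup_cons] at hQnodup
    have hCtnodup : C.support.tail.Nodup := by
      rw [hCtail]
      simp only [List.nodup_append, List.nodup_cons, List.not_mem_nil, not_false_iff,
        List.nodup_nil, and_true, List.mem_singleton]
      refine ⟨hQnodup.2, trivial, fun {a} ha' b hb' => ?_⟩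
      rw [hb']
      intro hax
      exact hQnodup.1 (hax ▸ ha')
    have hTpath : C'.tail.IsPath := by
      rw [Walk.isPath_def, htailsup]
      exact (hrot.nodup_iff).mpr hCtnodup
    have hmemT : ∀ z, z ∈ C'.tail.support ↔ z ∈ P.support := by
      intro z
      rw [htailsup, hrot.mem_iff, hCtail, List.mem_append, List.mem_singleton,
        ← hQmem z, Q.support_eq_cons, List.mem_cons]
      tauto
    have hyx : G.Adj y x := hxy.symm
    set D := C'.tail.concat hyx with hDdef
    have hDpath : D.IsPath := by
      rw [Walk.isPath_def, hDdef, Walk.support_concat]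
      simp only [List.nodup_append, List.nodup_cons, List.not_mem_nil, not_false_iff,
        List.nodup_nil, and_true, List.mem_singleton]
      refine ⟨hTpath.support_nodup, trivial, fun {a} ha' b hb' => ?_⟩
      rw [hb']
      intro hax
      exact hxs ((hmemT x).mp (hax ▸ ha'))
    have hDlen : D.length = ℓ + 1 := by
      have ht1 := Walk.length_tail_add_one hC'nil
      rw [hDdef, Walk.length_concat]
      omega
    have := hmax _ _ D hDpath
    omega
  -- conclude
  have hsub : A ∪ B ⊆ Finset.range ℓ :=
    Finset.union_subset (Finset.filter_subset _ _) (Finset.filter_subset _ _)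
  have hfinal := (Finset.card_union_of_disjoint hdisj).symm.trans_le
    ((Finset.card_le_card hsub).trans_eq (Finset.card_range ℓ))
  omega
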